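/- Under the assumptions Q⁰_Ñ ∈ S^{n−1}₊, Qᵖ ∈ Sⁿ₊ (p ∈ I_eq), Qᵖ_Ñ ∈ S^{n−1}₊ (p ∈ I_ineq), if X = [[1, yᵀ],[y, Y]] with y ∈ ℝ^{n−1}₊ and Y ∈ DNN^{n−1} is a feasible solution of COP(DNNⁿ), then X̄ = [[1, yᵀ],[y, yyᵀ]] is a feasible solution of COP(Γⁿ) with objective value ⟨Q⁰, X̄⟩ ≤ ⟨Q⁰, X⟩. -/

import Mathlib

open Matrix
open scoped MatrixOrder
lemma trace_mul_vecMulVec {m : ℕ} (Q : Matrix (Fin m) (Fin m) ℝ) (z : Fin m → ℝ) :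
    trace (Q * vecMulVec z z) = z ⬝ᵥ Q *ᵥ z := by
  simp only [trace, diag, mul_apply, vecMulVec_apply, dotProduct, mulVec, Finset.mul_sum]
  apply Finset.sum_congr rfl
  intro i _
  apply Finset.sum_congr rfl
  intro j _
  ring

-- trace (Q * D) ≥ 0 when D PSD, D e e = 0, and Q PSD on {x | x e = 0}
lemma trace_nonneg_aux {m : ℕ} (Q D : Matrix (Fin m) (Fin m) ℝ) (e : Fin m)
    (hD : D.PosSemidef) (hDe : D e e = 0)
    (hQ : ∀ x : Fin m → ℝ, x e = 0 → 0 ≤ x ⬝ᵥ Q *ᵥ x) :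
    0 ≤ trace (Q * D) := by
  set T := CFC.sqrt D with hT
  have hTsym : ∀ i j, T i j = T j i := by
    intro i j
    have := (Matrix.nonneg_iff_posSemidef.mp (CFC.sqrt_nonneg D)).1
    have h2 := congrFun (congrFun this i) j
    simpa [conjTranspose_apply] using h2.symm
  have hTe : ∀ k, T e k = 0 := by
    have h2 : ∑ j, T e j * T j e = D e e := by
      have := congrFun (congrFun (CFC.sqrt_mul_sqrt_self D hD.nonneg) e) e
      simpa [mul_apply, ← hT] using this
    have hsum : ∑ k, T e k ^ 2 = 0 := by
      rw [← hDe, ← h2]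
      exact Finset.sum_congr rfl fun k _ => by rw [sq, hTsym k e]
    intro k
    have := Finset.sum_eq_zero_iff_of_nonneg (fun i _ => sq_nonneg (T e i)) |>.mp hsum k (Finset.mem_univ k)
    exact pow_eq_zero_iff (by norm_num) |>.mp this
  have hDTT : D = T * T := (CFC.sqrt_mul_sqrt_self D hD.nonneg).symm
  rw [hDTT, ← mul_assoc, trace_mul_cycle]
  have : trace (T * Q * T) = ∑ j, (fun k => T k j) ⬝ᵥ Q *ᵥ (fun k => T k j) := by
    simp only [trace, diag, mul_apply, dotProduct, mulVec, Finset.mul_sum, Finset.sum_mul]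
    apply Finset.sum_congr rfl
    intro j _
    rw [Finset.sum_comm]
    apply Finset.sum_congr rfl
    intro i _
    apply Finset.sum_congr rfl
    intro k _
    rw [hTsym j i]
    ring
  rw [this]
  apply Finset.sum_nonneg
  intro j _
  exact hQ _ (hTe j)


def Gamma (n : ℕ) : Set (Matrix (Fin n) (Fin n) ℝ) :=
  {X | ∃ x : Fin n → ℝ, (∀ i, 0 ≤ x i) ∧ X = vecMulVec x x}

def DNN (n : ℕ) : Set (Matrix (Fin n) (Fin n) ℝ) :=
  {X | X.PosSemidef ∧ ∀ i j, 0 ≤ X i j}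

theorem stmt_9 {n : ℕ} {ι : Type} (Ieq Iineq : Finset ι) (hdisj : Disjoint Ieq Iineq)
    (Q0 : Matrix (Fin (n + 1)) (Fin (n + 1)) ℝ)
    (Q : ι → Matrix (Fin (n + 1)) (Fin (n + 1)) ℝ)
    (hQ0sym : Q0.IsSymm) (hQsym : ∀ p, (Q p).IsSymm)
    -- Q⁰_Ñ is positive semidefinite
    (hQ0 : ∀ x : Fin (n + 1) → ℝ, x 0 = 0 → 0 ≤ x ⬝ᵥ Q0.mulVec x)
    -- Qᵖ ∈ Sⁿ₊ for p ∈ I_eq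
    (hQeq : ∀ p ∈ Ieq, (Q p).PosSemidef)
    -- Qᵖ_Ñ is positive semidefinite for p ∈ I_ineq
    (hQineq : ∀ p ∈ Iineq, ∀ x : Fin (n + 1) → ℝ, x 0 = 0 → 0 ≤ x ⬝ᵥ (Q p).mulVec x)
    -- X = [[1, yᵀ],[y, Y]] is a feasible solution of COP(DNN)
    (X : Matrix (Fin (n + 1)) (Fin (n + 1)) ℝ)
    (hXdnn : X ∈ DNN (n + 1)) (hX11 : X 0 0 = 1)
    (hfeq : ∀ p ∈ Ieq, trace (Q p * X) = 0)
    (hfineq : ∀ p ∈ Iineq, trace (Q p * X) ≤ 0) :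
    -- X̄ = [[1, yᵀ],[y, yyᵀ]] = zzᵀ with z the first column of X
    let z : Fin (n + 1) → ℝ := fun i => X i 0
    let Xbar := vecMulVec z z
    Xbar ∈ Gamma (n + 1) ∧ Xbar 0 0 = 1 ∧
      (∀ p ∈ Ieq, trace (Q p * Xbar) = 0) ∧
      (∀ p ∈ Iineq, trace (Q p * Xbar) ≤ 0) ∧
      trace (Q0 * Xbar) ≤ trace (Q0 * X) := by
  intro z Xbar
  obtain ⟨hXpsd, hXnn⟩ := hXdnn
  have hz0 : z 0 = 1 := hX11
  -- D := X - Xbar is PSD with D 0 0 = 0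
  set S := CFC.sqrt X with hS
  have hSsym : ∀ i j, S i j = S j i := by
    intro i j
    have h2 := congrFun (congrFun (Matrix.nonneg_iff_posSemidef.mp (CFC.sqrt_nonneg X)).1 i) j
    simpa [conjTranspose_apply] using h2.symm
  have hSS : S * S = X := CFC.sqrt_mul_sqrt_self X hXpsd.nonneg
  have hzdot : ∀ v : Fin (n + 1) → ℝ, z ⬝ᵥ v = (fun k => S k 0) ⬝ᵥ (S *ᵥ v) := by
    intro v
    simp only [dotProduct, mulVec, Finset.mul_sum]
    have : ∀ i, z i = ∑ k, S i k * S k 0 := by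
      intro i
      have := congrFun (congrFun hSS i) 0
      simp only [mul_apply] at this
      exact this.symm
    simp only [this, Finset.sum_mul]
    rw [Finset.sum_comm]
    refine Finset.sum_congr rfl fun k _ => Finset.sum_congr rfl fun i _ => ?_
    rw [hSsym k i]; ring
  have hStrans : Sᵀ = S := by
    ext i j; exact hSsym j i
  have hXquad : ∀ v : Fin (n + 1) → ℝ, v ⬝ᵥ X *ᵥ v = ∑ k, (S *ᵥ v) k ^ 2 := by
    intro v
    rw [← hSS, ← mulVec_mulVec, dotProduct_mulVec, ← hStrans, vecMul_transpose, hStrans]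
    simp [dotProduct, sq]
  have hu : ∑ k, S k 0 ^ 2 = 1 := by
    have := congrFun (congrFun hSS 0) 0
    simp only [mul_apply] at this
    rw [← hX11, ← this]
    exact Finset.sum_congr rfl fun k _ => by rw [sq, hSsym k 0]
  have hXbarquad : ∀ v : Fin (n + 1) → ℝ, v ⬝ᵥ Xbar *ᵥ v = (z ⬝ᵥ v) ^ 2 := by
    intro v
    simp only [Xbar, dotProduct, mulVec, vecMulVec_apply, sq, Finset.mul_sum,
      Finset.sum_mul]
    refine Finset.sum_congr rfl fun i _ => Finset.sum_congr rfl fun j _ => ?_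
    ring
  have hDpsd : (X - Xbar).PosSemidef := by
    refine Matrix.PosSemidef.of_dotProduct_mulVec_nonneg ?_ ?_
    · have hXh := hXpsd.1
      have hXbarh : Xbar.IsHermitian := by
        ext i j
        simp [Xbar, conjTranspose_apply, vecMulVec_apply, mul_comm]
      exact hXh.sub hXbarh
    · intro v
      have : (0 : ℝ) ≤ v ⬝ᵥ (X - Xbar) *ᵥ v := by
        rw [sub_mulVec, dotProduct_sub, hXbarquad, hXquad, hzdot, sub_nonneg]
        calc ((fun k => S k 0) ⬝ᵥ (S *ᵥ v)) ^ 2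
            ≤ (∑ k, S k 0 ^ 2) * ∑ k, (S *ᵥ v) k ^ 2 :=
              Finset.sum_mul_sq_le_sq_mul_sq _ _ _
          _ = ∑ k, (S *ᵥ v) k ^ 2 := by rw [hu, one_mul]
      simpa using this
  have hD0 : (X - Xbar) 0 0 = 0 := by
    simp [Xbar, vecMulVec_apply, hX11, z]
  have htr : ∀ M : Matrix (Fin (n + 1)) (Fin (n + 1)) ℝ,
      trace (M * (X - Xbar)) = trace (M * X) - trace (M * Xbar) := by
    intro M
    rw [mul_sub, trace_sub]
  refine ⟨⟨z, fun i => hXnn i 0, rfl⟩, by simp [Xbar, vecMulVec_apply, hz0], ?_, ?_, ?_⟩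
  · intro p hp
    have hpsd := hQeq p hp
    have h1 : 0 ≤ trace (Q p * Xbar) := by
      rw [trace_mul_vecMulVec]
      have := hpsd.dotProduct_mulVec_nonneg z
      simpa using this
    have h2 : 0 ≤ trace (Q p * (X - Xbar)) :=
      trace_nonneg_aux _ _ 0 hDpsd hD0 (fun x _ => by simpa using hpsd.dotProduct_mulVec_nonneg x)
    rw [htr] at h2
    have := hfeq p hp
    linarith
  · intro p hp
    have h2 : 0 ≤ trace (Q p * (X - Xbar)) :=
      trace_nonneg_aux _ _ 0 hDpsd hD0 (hQineq p hp)
    rw [htr] at h2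
    have := hfineq p hp
    linarith
  · have h2 : 0 ≤ trace (Q0 * (X - Xbar)) :=
      trace_nonneg_aux _ _ 0 hDpsd hD0 hQ0
    rw [htr] at h2
    linarith
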